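/- Let p be an odd prime and consider the polynomials g(x) = 1 + x + x² + ⋯ + x^{(p−3)/2} and k(x) = (x − 1)·(x^{(p−1)/2} + 1) in ℤ[x]. Then the quotient ring ℤ[x]/(g(x), k(x)) (the quotient by the ideal generated by g and k) is finite, of cardinality 2^{(p−3)/2}·(p−1)/2. (This is the computation in Appendix B, Step 4, giving |m(Y)| as the absolute value of the resultant of g and k.) -/

import Mathlib

open Polynomial

/-- The polynomial `g(x) = 1 + x + ⋯ + x^{(p−3)/2} = Σ_{i < (p−1)/2} xⁱ ∈ ℤ[x]`. -/
noncomputable def gPoly (p : ℕ) : Polynomial ℤ :=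
  ∑ i ∈ Finset.range ((p - 1) / 2), X ^ i

/-- The polynomial `k(x) = (x − 1)·(x^{(p−1)/2} + 1) ∈ ℤ[x]`. -/
noncomputable def kPoly (p : ℕ) : Polynomial ℤ :=
  (X - 1) * (X ^ ((p - 1) / 2) + 1)

namespace Stmt19Aux

open Finset

noncomputable def g' (e : ℕ) : Polynomial ℤ := ∑ i ∈ Finset.range (e+2), X ^ i
lemma g'_monic (e : ℕ) : (g' e).Monic := Polynomial.monic_geom_sum_X (by omega)
lemma g'_natDegree (e : ℕ) : (g' e).natDegree = e + 1 := by
  unfold g'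
  rw [Finset.sum_range_succ, Polynomial.natDegree_add_eq_right_of_natDegree_lt]
  · exact natDegree_X_pow _
  · rw [natDegree_X_pow]
    refine lt_of_le_of_lt (Polynomial.natDegree_sum_le_of_forall_le _ _ ?_) (by omega : e < e+1)
    intro i hi
    simpa using Nat.le_of_lt_succ (by simpa using Finset.mem_range.mp hi)

noncomputable def hh : Polynomial ℤ := 2 * (X - 1)
noncomputable def rr (e : ℕ) : AdjoinRoot (g' e) := AdjoinRoot.mk (g' e) hh

noncomputable def bb (e : ℕ) : Module.Basis (Fin (e+1)) ℤ (AdjoinRoot (g' e)) :=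
  (AdjoinRoot.powerBasis' (g'_monic e)).basis.reindex (finCongr (by
    rw [AdjoinRoot.powerBasis'_dim, g'_natDegree]))

lemma bb_apply (e : ℕ) (i : Fin (e+1)) : bb e i = (AdjoinRoot.root (g' e)) ^ (i : ℕ) := by
  rw [bb, Module.Basis.reindex_apply]
  rw [(AdjoinRoot.powerBasis' (g'_monic e)).basis_eq_pow]
  rfl

lemma rr_eq (e : ℕ) : rr e = 2 * AdjoinRoot.root (g' e) - 2 := by
  have : (AdjoinRoot.mk (g' e)) (2 * (X - 1)) = 2 * AdjoinRoot.root (g' e) - 2 := by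
    rw [map_mul, map_sub, AdjoinRoot.mk_X, map_one, map_ofNat]; ring
  simpa [rr, hh] using this

-- the key relation: root^(e+1) = -∑_{i<e+1} root^i
lemma root_pow_top (e : ℕ) :
    (AdjoinRoot.root (g' e)) ^ (e+1) = -∑ i ∈ Finset.range (e+1), (AdjoinRoot.root (g' e)) ^ i := by
  have h0 : (AdjoinRoot.mk (g' e)) (∑ i ∈ Finset.range (e+2), X ^ i) = 0 := AdjoinRoot.mk_self
  rw [map_sum] at h0
  simp only [map_pow, AdjoinRoot.mk_X] at h0
  rw [Finset.sum_range_succ] at h0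
  exact eq_neg_of_add_eq_zero_left (by rw [add_comm] at h0; exact h0)

noncomputable def Lsum (e : ℕ) : (Fin (e+1) → ℤ) →ₗ[ℤ] (Fin (e+1) → ℤ) where
  toFun x := fun j => ∑ i ∈ Finset.Iic j, x i
  map_add' x y := by funext j; simp [Finset.sum_add_distrib]
  map_smul' c x := by funext j; simp [Finset.mul_sum]

lemma Iic_decomp {e : ℕ} (j : Fin (e+1)) : Finset.Iic j = insert j (Finset.Iio j) :=
  (Finset.Iio_insert j).symm

lemma Iio_zero {e : ℕ} (j : Fin (e+1)) (hj : (j:ℕ) = 0) : Finset.Iio j = ∅ := by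
  ext i; simp [Finset.mem_Iio, Fin.lt_def, hj]

lemma Iio_succ {e : ℕ} (j : Fin (e+1)) {m : ℕ} (hj : (j:ℕ) = m+1) :
    Finset.Iio j = Finset.Iic (⟨m, by omega⟩ : Fin (e+1)) := by
  ext i; simp only [Finset.mem_Iio, Finset.mem_Iic, Fin.lt_def, Fin.le_def, hj]; omega

lemma Lsum_bijective (e : ℕ) : Function.Bijective (Lsum e) := by
  constructor
  · rw [← LinearMap.ker_eq_bot]
    ext x
    simp only [LinearMap.mem_ker, Submodule.mem_bot]
    constructor
    · intro hx
      have hx' : ∀ j, ∑ i ∈ Finset.Iic j, x i = 0 := fun j => congrFun hx j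
      funext j
      rcases Nat.eq_zero_or_eq_succ_pred (j : ℕ) with h0 | hs
      · have := hx' j
        rw [Iic_decomp, Finset.sum_insert (by simp), Iio_zero j h0] at this
        simpa using this
      · obtain ⟨m, hm⟩ : ∃ m, (j:ℕ) = m + 1 := ⟨(j:ℕ)-1, by omega⟩
        have := hx' j
        rw [Iic_decomp, Finset.sum_insert (by simp), Iio_succ j hm,
          hx' ⟨m, by omega⟩] at this
        simpa using this
    · rintro rfl; funext j; simp [Lsum]
  · intro y
    refine ⟨fun j => y j - (if hj : (j:ℕ) = 0 then 0 else y ⟨(j:ℕ)-1, by omega⟩), ?_⟩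
    funext j
    simp only [Lsum, LinearMap.coe_mk, AddHom.coe_mk]
    obtain ⟨jv, hjv⟩ : ∃ jv, (j:ℕ) = jv := ⟨j, rfl⟩
    induction jv generalizing j with
    | zero =>
      rw [Iic_decomp, Finset.sum_insert (by simp), Iio_zero j hjv]
      simp [hjv]
    | succ m ih =>
      rw [Iic_decomp, Finset.sum_insert (by simp), Iio_succ j hjv,
        ih ⟨m, by omega⟩ rfl]
      rw [dif_neg (by omega : ¬ ((j:ℕ) = 0))]
      have hjm : (⟨(j:ℕ)-1, by omega⟩ : Fin (e+1)) = ⟨m, by omega⟩ := by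
        apply Fin.ext; simp [hjv]
      rw [hjm]
      ring


noncomputable def Teq (e : ℕ) : (Fin (e+1) → ℤ) ≃ₗ[ℤ] (Fin (e+1) → ℤ) :=
  LinearEquiv.ofBijective (Lsum e) (Lsum_bijective e)

noncomputable def psi (e : ℕ) : AdjoinRoot (g' e) ≃ₗ[ℤ] (Fin (e+1) → ℤ) :=
  (bb e).equivFun.trans (Teq e)

lemma psi_apply (e : ℕ) (s : AdjoinRoot (g' e)) (j : Fin (e+1)) :
    psi e s j = ∑ t ∈ Finset.Iic j, (bb e).equivFun s t := rfl

lemma coordA (e m : ℕ) (hm : m ≤ e) (j : Fin (e+1)) :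
    (bb e).equivFun ((AdjoinRoot.root (g' e)) ^ m) j = if (j:ℕ) = m then 1 else 0 := by
  have h : ((AdjoinRoot.root (g' e)) ^ m) = bb e ⟨m, by omega⟩ := (bb_apply e ⟨m, by omega⟩).symm
  rw [h, Module.Basis.equivFun_self]
  simp only [Fin.ext_iff]
  by_cases hc : (j:ℕ) = m
  · simp [hc]
  · simp [hc, Ne.symm hc]

lemma coordB (e : ℕ) (j : Fin (e+1)) :
    (bb e).equivFun ((AdjoinRoot.root (g' e)) ^ (e+1)) j = -1 := by
  rw [root_pow_top, map_neg, map_sum]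
  simp only [Pi.neg_apply, Finset.sum_apply]
  rw [Finset.sum_congr rfl (fun i hi => coordA e i (by simpa using Nat.le_of_lt_succ (Finset.mem_range.mp hi)) j)]
  rw [Finset.sum_ite_eq]
  simp [j.isLt]

noncomputable def ww (e : ℕ) (i : Fin (e+1)) : AdjoinRoot (g' e) :=
  (AdjoinRoot.root (g' e))^(i:ℕ) * rr e

lemma ww_eq (e : ℕ) (i : Fin (e+1)) :
    ww e i = (2:ℤ) • (AdjoinRoot.root (g' e))^((i:ℕ)+1) - (2:ℤ) • (AdjoinRoot.root (g' e))^(i:ℕ) := by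
  rw [ww, rr_eq]
  simp only [zsmul_eq_mul, Int.cast_ofNat]
  push_cast
  ring

lemma sum_ite_coord (e : ℕ) (j : Fin (e+1)) (c : ℕ) (hc : c < e+1) (v : ℤ) :
    ∑ t ∈ Finset.Iic j, (if (t:ℕ) = c then v else 0) = if c ≤ (j:ℕ) then v else 0 := by
  have h1 : ∀ t : Fin (e+1), ((t:ℕ) = c) = (t = ⟨c, hc⟩) := fun t => by simp [Fin.ext_iff]
  simp only [h1]
  rw [Finset.sum_ite_eq']
  simp [Finset.mem_Iic, Fin.le_def]

lemma uA (e : ℕ) (i : Fin (e+1)) (hi : (i:ℕ) < e) (j : Fin (e+1)) :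
    psi e (ww e i) j = if j = i then -2 else 0 := by
  rw [psi_apply]
  have h : ∀ t ∈ Finset.Iic j, (bb e).equivFun (ww e i) t
      = ((if (t:ℕ) = (i:ℕ)+1 then (2:ℤ) else 0) - (if (t:ℕ) = (i:ℕ) then 2 else 0)) := by
    intro t _
    rw [ww_eq, map_sub, map_smul, map_smul]
    simp only [Pi.sub_apply, Pi.smul_apply, smul_eq_mul]
    rw [coordA e _ (by omega) t, coordA e _ (by omega) t]
    split_ifs <;> ring
  rw [Finset.sum_congr rfl h, Finset.sum_sub_distrib,
    sum_ite_coord e j _ (by omega), sum_ite_coord e j _ (by omega)]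
  simp only [Fin.ext_iff]
  split_ifs <;> omega

lemma uB (e : ℕ) (j : Fin (e+1)) :
    psi e (ww e (Fin.last e)) j = if (j:ℕ) = e then -2*((e:ℤ)+2) else -2*((j:ℕ)+1) := by
  rw [psi_apply]
  have h : ∀ t ∈ Finset.Iic j, (bb e).equivFun (ww e (Fin.last e)) t
      = (-2 - (if (t:ℕ) = e then (2:ℤ) else 0)) := by
    intro t _
    rw [ww_eq, map_sub, map_smul, map_smul]
    simp only [Pi.sub_apply, Pi.smul_apply, smul_eq_mul]
    rw [show ((Fin.last e : ℕ)+1) = e+1 from rfl, coordB,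
      show ((Fin.last e : ℕ)) = e from rfl, coordA e e le_rfl t]
    split_ifs <;> ring
  rw [Finset.sum_congr rfl h, Finset.sum_sub_distrib, sum_ite_coord e j e (by omega)]
  rw [Finset.sum_const, Fin.card_Iic]
  have hj := j.isLt
  simp only [nsmul_eq_mul]
  split_ifs <;> push_cast <;> omega

noncomputable def aa (e : ℕ) : Fin (e+1) → ℤ := fun j => if (j:ℕ) = e then 2*((e:ℤ)+2) else 2

noncomputable def PP (e : ℕ) : Submodule ℤ (Fin (e+1) → ℤ) :=
  Submodule.pi Set.univ (fun j => Ideal.span {aa e j})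

lemma Nspan (e : ℕ) :
    (Ideal.span {rr e}).restrictScalars ℤ = Submodule.span ℤ (Set.range (ww e)) := by
  apply le_antisymm
  · intro s hs
    rw [Submodule.restrictScalars_mem] at hs
    obtain ⟨t, ht⟩ := Ideal.mem_span_singleton'.mp hs
    have hts : t = ∑ i, ((bb e).repr t) i • bb e i := (Module.Basis.sum_repr _ t).symm
    rw [← ht, hts, Finset.sum_mul]
    refine Submodule.sum_mem _ fun i _ => ?_
    rw [smul_mul_assoc, bb_apply]
    exact Submodule.smul_mem _ _ (Submodule.subset_span ⟨i, rfl⟩)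
  · rw [Submodule.span_le]
    rintro s ⟨i, rfl⟩
    rw [SetLike.mem_coe, Submodule.restrictScalars_mem, ww]
    exact Ideal.mul_mem_left _ _ (Ideal.subset_span rfl)

lemma mapPsi (e : ℕ) :
    Submodule.map (psi e : AdjoinRoot (g' e) →ₗ[ℤ] (Fin (e+1) → ℤ))
      ((Ideal.span {rr e}).restrictScalars ℤ) = PP e := by
  rw [Nspan, Submodule.map_span, ← Set.range_comp]
  apply le_antisymm
  · rw [Submodule.span_le]
    rintro x ⟨i, rfl⟩
    refine SetLike.mem_coe.mpr (Submodule.mem_pi.mpr fun j _ => ?_)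
    rw [Ideal.mem_span_singleton]
    simp only [Function.comp_apply, LinearEquiv.coe_coe]
    by_cases hi : (i:ℕ) = e
    · rw [Fin.ext hi (b := Fin.last e), uB]
      unfold aa
      by_cases hj : (j:ℕ) = e
      · rw [if_pos hj, if_pos hj]; exact ⟨-1, by ring⟩
      · rw [if_neg hj, if_neg hj]; exact ⟨-((j:ℤ)+1), by ring⟩
    · rw [uA e i (by have := i.isLt; omega : (i:ℕ) < e)]
      by_cases hj : j = i
      · have hje : ¬ ((j:ℕ) = e) := by rw [hj]; omega
        unfold aa
        rw [if_pos hj, if_neg hje]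
        exact ⟨-1, by ring⟩
      · rw [if_neg hj]
        exact dvd_zero _
  · intro x hx
    have hx' : ∀ j, aa e j ∣ x j := fun j =>
      Ideal.mem_span_singleton.mp (Submodule.mem_pi.mp hx j trivial)
    choose c hc using hx'
    have hxsum : x = ∑ j, c j • Pi.single j (aa e j) := by
      funext t
      rw [← Finset.univ_sum_single x]
      simp only [Finset.sum_apply, Pi.smul_apply, smul_eq_mul]
      refine Finset.sum_congr rfl fun j _ => ?_
      rw [Pi.single_apply, Pi.single_apply]
      split_ifs with hsp
      · rw [hc j]; ring
      · ring
    rw [hxsum]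
    refine Submodule.sum_mem _ fun j _ => Submodule.smul_mem _ _ ?_
    by_cases hj : (j:ℕ) = e
    · have hkey : Pi.single j (aa e j) =
          -(psi e (ww e (Fin.last e)))
            + ∑ i : Fin e, (((i:ℕ)+1 : ℤ)) • psi e (ww e (Fin.castSucc i)) := by
        funext t
        simp only [Pi.add_apply, Pi.neg_apply, Finset.sum_apply, Pi.smul_apply, smul_eq_mul]
        rw [uB]
        rw [Finset.sum_congr rfl (fun i _ => by
          rw [uA e (Fin.castSucc i) (by simpa using i.isLt) t])]
        rw [Pi.single_apply]
        by_cases ht : (t:ℕ) < e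
        · have htj : ¬ (t = j) := by rw [Fin.ext_iff]; omega
          have hte : ¬ ((t:ℕ) = e) := by omega
          rw [if_neg htj, if_neg hte]
          rw [Finset.sum_eq_single ⟨(t:ℕ), ht⟩ (fun i _ hne => by
            rw [if_neg (fun hcon => hne (by rw [Fin.ext_iff] at hcon ⊢; simpa using hcon.symm))]
            ring)
            (fun hmem => absurd (Finset.mem_univ _) hmem)]
          rw [if_pos (by rw [Fin.ext_iff]; simp)]
          push_cast
          ring
        · have hte : (t:ℕ) = e := by have := t.isLt; omega
          have htj : t = j := by rw [Fin.ext_iff]; omega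
          rw [if_pos htj, if_pos hte]
          rw [Finset.sum_eq_zero (fun i _ => by
            rw [if_neg (fun hcon => by rw [Fin.ext_iff] at hcon; simp at hcon; omega)]
            ring)]
          unfold aa
          rw [if_pos hj]
          ring
      rw [hkey]
      refine Submodule.add_mem _ (Submodule.neg_mem _ (Submodule.subset_span ⟨Fin.last e, rfl⟩)) ?_
      exact Submodule.sum_mem _ fun i _ =>
        Submodule.smul_mem _ _ (Submodule.subset_span ⟨Fin.castSucc i, rfl⟩)
    · have hkey : Pi.single j (aa e j) = -(psi e (ww e j)) := by
        funext t
        simp only [Pi.neg_apply]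
        rw [uA e j (by have := j.isLt; omega : (j:ℕ) < e), Pi.single_apply]
        unfold aa
        split_ifs <;> simp_all
      rw [hkey]
      exact Submodule.neg_mem _ (Submodule.subset_span ⟨j, rfl⟩)

noncomputable def E1 (e : ℕ) :
    (Polynomial ℤ ⧸ Ideal.span {g' e, hh}) ≃+*
      (AdjoinRoot (g' e) ⧸ Ideal.span {rr e}) := by
  have h1 : Ideal.span {g' e, hh} = Ideal.span {g' e} ⊔ Ideal.span {hh} := Ideal.span_insert _ _
  have h2 : Ideal.map (Ideal.Quotient.mk (Ideal.span {g' e})) (Ideal.span {hh}) =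
      Ideal.span {rr e} := by
    rw [Ideal.map_span, Set.image_singleton]; rfl
  exact ((Ideal.quotEquivOfEq h1).trans
    (DoubleQuot.quotQuotEquivQuotSup (Ideal.span {g' e}) (Ideal.span {hh})).symm).trans
    (@Ideal.quotEquivOfEq _ _ _ _ ⟨fun b ha => by rw [mul_comm]; exact Ideal.mul_mem_left _ b ha⟩
      ⟨fun b ha => by rw [mul_comm]; exact Ideal.mul_mem_left _ b ha⟩ h2)

noncomputable def E2 (e : ℕ) :
    (AdjoinRoot (g' e) ⧸ (Ideal.span {rr e}).restrictScalars ℤ) ≃ₗ[ℤ]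
      (AdjoinRoot (g' e) ⧸ Ideal.span {rr e}) :=
  Submodule.Quotient.restrictScalarsEquiv ℤ _

noncomputable def E3 (e : ℕ) :
    (AdjoinRoot (g' e) ⧸ (Ideal.span {rr e}).restrictScalars ℤ) ≃ₗ[ℤ]
      ((Fin (e+1) → ℤ) ⧸ PP e) :=
  Submodule.Quotient.equiv _ _ (psi e) (mapPsi e)

noncomputable def E4 (e : ℕ) :
    ((Fin (e+1) → ℤ) ⧸ PP e) ≃ₗ[ℤ] Π j : Fin (e+1), ℤ ⧸ Ideal.span {aa e j} :=
  Submodule.quotientPi _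

noncomputable def finalEquiv (e : ℕ) :
    (Polynomial ℤ ⧸ Ideal.span {g' e, hh}) ≃ (Π j : Fin (e+1), ZMod ((aa e j).natAbs)) :=
  ((((E1 e).toEquiv.trans (E2 e).symm.toEquiv).trans (E3 e).toEquiv).trans
    (E4 e).toEquiv).trans
    (Equiv.piCongrRight fun j => (Int.quotientSpanEquivZMod (aa e j)).toEquiv)

lemma aa_natAbs_castSucc (e : ℕ) (i : Fin e) : (aa e (Fin.castSucc i)).natAbs = 2 := by
  unfold aa
  rw [if_neg (by have := i.isLt; simpa using (by omega : ¬ ((i:ℕ) = e)))]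
  rfl

lemma aa_natAbs_last (e : ℕ) : (aa e (Fin.last e)).natAbs = 2*(e+2) := by
  unfold aa
  rw [if_pos (Fin.val_last e), show (2*((e:ℤ)+2)) = ((2*(e+2) : ℕ) : ℤ) by push_cast; ring, Int.natAbs_natCast]

lemma aa_natAbs_ne (e : ℕ) (j : Fin (e+1)) : (aa e j).natAbs ≠ 0 := by
  unfold aa
  split_ifs <;> simp <;> omega

lemma aux (e : ℕ) :
    Finite (Polynomial ℤ ⧸ Ideal.span {g' e, hh}) ∧
      Nat.card (Polynomial ℤ ⧸ Ideal.span {g' e, hh}) = 2^(e+1) * (e+2) := by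
  have hfin : ∀ j : Fin (e+1), Finite (ZMod ((aa e j).natAbs)) := fun j => by
    haveI : NeZero ((aa e j).natAbs) := ⟨aa_natAbs_ne e j⟩
    infer_instance
  haveI := hfin
  constructor
  · exact Finite.of_equiv _ (finalEquiv e).symm
  · rw [Nat.card_congr (finalEquiv e), Nat.card_pi]
    simp only [Nat.card_zmod]
    rw [Fin.prod_univ_castSucc]
    rw [Finset.prod_congr rfl (fun i _ => aa_natAbs_castSucc e i), aa_natAbs_last,
      Finset.prod_const, Finset.card_univ, Fintype.card_fin]
    ring

end Stmt19Aux

open Stmt19Aux in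
/-- Appendix B, Step 4: for an odd prime `p`, the quotient ring `ℤ[x]/(g(x), k(x))` is
finite of cardinality `2^{(p−3)/2}·(p−1)/2` (the absolute value of the resultant of `g`
and `k`). -/
theorem stmt19 (p : ℕ) (hp : p.Prime) (hodd : Odd p) :
    Finite (Polynomial ℤ ⧸ Ideal.span {gPoly p, kPoly p}) ∧
    Nat.card (Polynomial ℤ ⧸ Ideal.span {gPoly p, kPoly p}) =
      2 ^ ((p - 3) / 2) * ((p - 1) / 2) := by
  have hge : 2 ≤ p := hp.two_le
  have hp2 : p % 2 = 1 := Nat.odd_iff.mp hodd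
  by_cases h3 : p = 3
  · subst h3
    have hg1 : gPoly 3 = 1 := by
      unfold gPoly
      rw [show (3-1)/2 = 1 from rfl, Finset.range_one, Finset.sum_singleton, pow_zero]
    have htop : Ideal.span {gPoly 3, kPoly 3} = ⊤ := by
      rw [Ideal.eq_top_iff_one, ← hg1]
      exact Ideal.subset_span (Set.mem_insert _ _)
    haveI : Subsingleton (Polynomial ℤ ⧸ Ideal.span {gPoly 3, kPoly 3}) :=
      Ideal.Quotient.subsingleton_iff.mpr htop
    exact ⟨Finite.of_subsingleton, by rw [Nat.card_unique]; norm_num⟩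
  · have h5 : 5 ≤ p := by rcases hodd with ⟨m, hm⟩; omega
    set e := (p-5)/2 with he
    have hpe : p = 2*e+5 := by omega
    have hg : gPoly p = g' e := by
      unfold gPoly g'
      rw [show (p-1)/2 = e+2 from by omega]
    have hk : kPoly p = (X - 1) * (X^(e+2) + 1) := by
      unfold kPoly; rw [show (p-1)/2 = e+2 from by omega]
    have hgm : (g' e) * (X - 1) = X^(e+2) - 1 := geom_sum_mul _ _
    have hspan : Ideal.span {gPoly p, kPoly p} = Ideal.span {g' e, hh} := by
      rw [hg]
      apply le_antisymm
      · rw [Ideal.span_le]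
        intro x hx
        simp only [Set.mem_insert_iff, Set.mem_singleton_iff] at hx
        rcases hx with rfl | rfl
        · exact Ideal.subset_span (Set.mem_insert _ _)
        · rw [hk]
          refine Ideal.mem_span_pair.mpr ⟨(X-1)^2, 1, ?_⟩
          unfold hh
          linear_combination ((X : Polynomial ℤ) - 1) * hgm
      · rw [Ideal.span_le]
        intro x hx
        simp only [Set.mem_insert_iff, Set.mem_singleton_iff] at hx
        rcases hx with rfl | rfl
        · exact Ideal.subset_span (Set.mem_insert _ _)
        · refine Ideal.mem_span_pair.mpr ⟨-(X-1)^2, 1, ?_⟩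
          rw [hk]
          unfold hh
          linear_combination (-((X : Polynomial ℤ) - 1)) * hgm
    rw [hspan, show (p-3)/2 = e+1 from by omega, show (p-1)/2 = e+2 from by omega]
    exact aux e
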